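/- Let L be a reflective subuniverse of types. Then every L-connected map is an L-equivalence. -/
import Mathlib


universe u

/-- A reflective subuniverse of `Type u`: a predicate `IsLocal` on types, an
operation `L`, and unit maps `unit X : X → L X`, such that `L X` is local and
precomposition with the unit is a bijection into maps to any local type. -/
structure ReflSub : Type (u + 1) where
  IsLocal : Type u → Prop
  L : Type u → Type u
  unit : ∀ X : Type u, X → L X
  local_L : ∀ X : Type u, IsLocal (L X)
  univ : ∀ (X Z : Type u), IsLocal Z →
    Function.Bijective (fun g : L X → Z => g ∘ unit X)

/-- The functorial action `L f : L A → L B`, the unique map with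
`L f ∘ η_A = η_B ∘ f`. -/
noncomputable def ReflSub.map (R : ReflSub.{u}) {A B : Type u} (f : A → B) :
    R.L A → R.L B :=
  Function.surjInv (R.univ A (R.L B) (R.local_L B)).2 (R.unit B ∘ f)

/-- `f` is an `L`-equivalence if `L f` is a bijection. -/
def ReflSub.IsEquiv (R : ReflSub.{u}) {A B : Type u} (f : A → B) : Prop :=
  Function.Bijective (R.map f)

/-- `f : A → B` is left orthogonal to `g : X → Y` (equivalently, `g` is right
orthogonal to `f`) if every commuting square from `f` to `g` admits a unique
diagonal filler. -/
def LeftOrth {A B X Y : Type u} (f : A → B) (g : X → Y) : Prop :=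
  ∀ (u : A → X) (v : B → Y), g ∘ u = v ∘ f →
    ∃! d : B → X, d ∘ f = u ∧ g ∘ d = v

/-- The square with projections `pa : P → A`, `pb : P → B` over the cospan
`f : A → C`, `g : B → C` commutes and is a pullback square: the induced map
`P → A ×_C B` is a bijection. -/
def IsPullbackSq {P A B C : Type u} (pa : P → A) (pb : P → B)
    (f : A → C) (g : B → C) : Prop :=
  (∀ p, f (pa p) = g (pb p)) ∧
    ∀ (a : A) (b : B), f a = g b → ∃! p : P, pa p = a ∧ pb p = b

/-- `f : A → B` is `L`-étale if its `L`-naturality square is a pullback square,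
i.e. the induced map `A → B ×_{L B} L A` is a bijection. -/
def ReflSub.IsEtale (R : ReflSub.{u}) {A B : Type u} (f : A → B) : Prop :=
  IsPullbackSq f (R.unit A) (R.unit B) (R.map f)

/-- A map is `L`-local if each of its fibers is an `L`-local type. -/
def ReflSub.IsLocalMap (R : ReflSub.{u}) {X Y : Type u} (g : X → Y) : Prop :=
  ∀ y : Y, R.IsLocal {x : X // g x = y}

/-- A map is `L`-connected if `L` of each of its fibers has exactly one
element. -/
def ReflSub.IsConnMap (R : ReflSub.{u}) {X Y : Type u} (g : X → Y) : Prop :=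
  ∀ y : Y, ∃ z : R.L {x : X // g x = y}, ∀ w : R.L {x : X // g x = y}, w = z

/-- `L` is a modality if the `L`-local types are closed under dependent sums. -/
def ReflSub.IsModality (R : ReflSub.{u}) : Prop :=
  ∀ (X : Type u) (P : X → Type u), R.IsLocal X → (∀ x, R.IsLocal (P x)) →
    R.IsLocal (Σ x, P x)

/-- `L` is lex if applying `L` to any pullback square yields a pullback
square. -/
def ReflSub.IsLex (R : ReflSub.{u}) : Prop :=
  ∀ (E' E B' B : Type u) (p' : E' → B') (g : E' → E) (f : B' → B) (p : E → B),
    IsPullbackSq p' g f p →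
    IsPullbackSq (R.map p') (R.map g) (R.map f) (R.map p)

lemma ReflSub.map_unit (R : ReflSub.{u}) {A B : Type u} (f : A → B) :
    R.map f ∘ R.unit A = R.unit B ∘ f :=
  Function.surjInv_eq (R.univ A (R.L B) (R.local_L B)).2 (R.unit B ∘ f)

lemma conn_precomp (R : ReflSub.{u}) {A B : Type u} (f : A → B)
    (hf : R.IsConnMap f) (Z : Type u) (hZ : R.IsLocal Z) :
    Function.Bijective (fun v : B → Z => v ∘ f) := by
  constructor
  · intro v v' h
    funext b
    have hb := R.univ {x : A // f x = b} Z hZ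
    have key : (fun _ : R.L {x : A // f x = b} => v b)
        = (fun _ : R.L {x : A // f x = b} => v' b) := by
      apply hb.1
      funext x
      have hx := congrFun h x.1
      simp only [Function.comp]
      calc v b = v (f x.1) := by rw [x.2]
        _ = v' (f x.1) := hx
        _ = v' b := by rw [x.2]
    obtain ⟨z, _⟩ := hf b
    exact congrFun key z
  · intro u
    refine ⟨fun b => Function.surjInv (R.univ {x : A // f x = b} Z hZ).2
      (fun x => u x.1) (Classical.choose (hf b)), ?_⟩
    funext a
    have hz := Classical.choose_spec (hf (f a))
    have h1 : Classical.choose (hf (f a))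
        = R.unit {x : A // f x = f a} ⟨a, rfl⟩ := (hz _).symm
    have h2 := congrFun (Function.surjInv_eq
      (R.univ {x : A // f x = f a} Z hZ).2 (fun x => u x.1))
      (⟨a, rfl⟩ : {x : A // f x = f a})
    simp only [Function.comp] at h2 ⊢
    rw [h1, h2]

/-- Every `L`-connected map is an `L`-equivalence. -/
theorem stmt_7 (R : ReflSub.{u}) (A B : Type u) (f : A → B)
    (hf : R.IsConnMap f) :
    R.IsEquiv f := by
  -- extend η_A along f
  obtain ⟨k0, hk0⟩ := (conn_precomp R f hf (R.L A) (R.local_L A)).2 (R.unit A)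
  -- extend k0 along η_B
  obtain ⟨k, hk⟩ := (R.univ B (R.L A) (R.local_L A)).2 k0
  simp only at hk0 hk
  have hmap := R.map_unit f
  have hmap' : ∀ a, R.map f (R.unit A a) = R.unit B (f a) := fun a => congrFun hmap a
  have hk' : ∀ b, k (R.unit B b) = k0 b := fun b => congrFun hk b
  have hk0' : ∀ a, k0 (f a) = R.unit A a := fun a => congrFun hk0 a
  have h1 : k ∘ R.map f = id := by
    apply (R.univ A (R.L A) (R.local_L A)).1
    funext a
    show k (R.map f (R.unit A a)) = R.unit A a
    rw [hmap' a, hk' (f a), hk0' a]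
  have h2 : R.map f ∘ k0 = R.unit B := by
    apply (conn_precomp R f hf (R.L B) (R.local_L B)).1
    funext a
    show R.map f (k0 (f a)) = R.unit B (f a)
    rw [hk0' a, hmap' a]
  have h3 : R.map f ∘ k = id := by
    apply (R.univ B (R.L B) (R.local_L B)).1
    funext b
    show R.map f (k (R.unit B b)) = R.unit B b
    rw [hk' b]
    exact congrFun h2 b
  exact ⟨Function.LeftInverse.injective (g := k) (congrFun h1),
    fun y => ⟨k y, congrFun h3 y⟩⟩
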